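/- arXiv:0910.0690 — 4 statements merged into one kernel-verified Lean document; each statement's English description precedes it below -/
import Mathlib

section
/- For all α, β > 0 and every complex number μ with Re μ > 0, one has (α + β) − (β − α)·e^{-2αμ} ≠ 0; consequently the 3×3 matrix Δ₀(μ) is invertible. -/
open Complex

lemma det_val_ne_zero (α β : ℝ) (hα : 0 < α) (hβ : 0 < β) (μ : ℂ) (hμ : 0 < μ.re) :
    ((α : ℂ) + β) - ((β : ℂ) - α) * Complex.exp (-2 * (α : ℂ) * μ) ≠ 0 := by
  intro h
  have habs : ‖Complex.exp (-2 * (α : ℂ) * μ)‖ < 1 := by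
    rw [Complex.norm_exp]
    apply Real.exp_lt_one_iff.mpr
    have : (-2 * (α : ℂ) * μ).re = -2 * α * μ.re := by
      simp [Complex.mul_re]
    rw [this]
    nlinarith
  have heq : ((α : ℂ) + β) = ((β : ℂ) - α) * Complex.exp (-2 * (α : ℂ) * μ) := by
    linear_combination h
  have h1 : ‖((α : ℂ) + β)‖ = α + β := by
    rw [← Complex.ofReal_add, Complex.norm_real, Real.norm_eq_abs, abs_of_pos (by linarith)]
  have h2 : ‖((β : ℂ) - α)‖ = |β - α| := by
    rw [← Complex.ofReal_sub, Complex.norm_real, Real.norm_eq_abs]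
  have := congrArg (‖·‖) heq
  rw [norm_mul, h1, h2] at this
  have hlt : |β - α| * ‖Complex.exp (-2 * (α : ℂ) * μ)‖ < α + β := by
    calc |β - α| * ‖Complex.exp (-2 * (α : ℂ) * μ)‖
        ≤ |β - α| * 1 := by
          apply mul_le_mul_of_nonneg_left habs.le (abs_nonneg _)
      _ = |β - α| := mul_one _
      _ < α + β := by cases abs_cases (β - α) with
          | inl hc => linarith [hc.1]
          | inr hc => linarith [hc.1]
  linarith [this.le, hlt]

/-- For α, β > 0 and Re μ > 0, the determinant value
(α + β) − (β − α)·e^{-2αμ} is nonzero, and consequently the 3×3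
boundary-matching matrix Δ₀(μ) is invertible. -/
theorem det_boundary_matrix_ne_zero_and_invertible
    (α β : ℝ) (hα : 0 < α) (hβ : 0 < β) (μ : ℂ) (hμ : 0 < μ.re) :
    ((α : ℂ) + β) - ((β : ℂ) - α) * Complex.exp (-2 * (α : ℂ) * μ) ≠ 0 ∧
    IsUnit
      (!![1, Complex.exp (-(α : ℂ) * μ), 0;
          Complex.exp (-(α : ℂ) * μ), 1, -1;
          -(α : ℂ) * Complex.exp (-(α : ℂ) * μ), (α : ℂ), (β : ℂ)] :
        Matrix (Fin 3) (Fin 3) ℂ) := by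
  have hne := det_val_ne_zero α β hα hβ μ hμ
  refine ⟨hne, ?_⟩
  rw [Matrix.isUnit_iff_isUnit_det, isUnit_iff_ne_zero]
  rw [Matrix.det_fin_three]
  simp [Matrix.cons_val_zero, Matrix.cons_val_one]
  have hE : Complex.exp (-(α : ℂ) * μ) * Complex.exp (-(α : ℂ) * μ)
      = Complex.exp (-2 * (α : ℂ) * μ) := by
    rw [← Complex.exp_add]; ring_nf
  intro h
  apply hne
  rw [← h, ← hE]
  ring
end

section
/- Let α, β > 0 and let μ be a complex number with Re μ > 0. Then for every φ ∈ ℂ there exist unique complex numbers c₁, c₂, c₃ satisfying the system: c₁ + e^{-αμ} c₂ = φ; e^{-αμ} c₁ + c₂ = c₃; −α e^{-αμ} c₁ + α c₂ = −β c₃. -/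
open Complex

/-- For α, β > 0, Re μ > 0 and any φ ∈ ℂ, there exist unique c₁, c₂, c₃ ∈ ℂ with
c₁ + e^{-αμ} c₂ = φ, e^{-αμ} c₁ + c₂ = c₃, −α e^{-αμ} c₁ + α c₂ = −β c₃. -/
theorem boundary_matching_system_existsUnique
    (α β : ℝ) (hα : 0 < α) (hβ : 0 < β) (μ : ℂ) (hμ : 0 < μ.re) (φ : ℂ) :
    ∃! c : ℂ × ℂ × ℂ,
      c.1 + Complex.exp (-(α : ℂ) * μ) * c.2.1 = φ ∧
      Complex.exp (-(α : ℂ) * μ) * c.1 + c.2.1 = c.2.2 ∧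
      -(α : ℂ) * Complex.exp (-(α : ℂ) * μ) * c.1 + (α : ℂ) * c.2.1
        = -(β : ℂ) * c.2.2 := by
  set E : ℂ := Complex.exp (-(α : ℂ) * μ) with hE
  set d : ℂ := ((α : ℂ) + β) + ((α : ℂ) - β) * E ^ 2 with hd
  have hEabs : ‖E‖ < 1 := by
    rw [hE, Complex.norm_exp]
    have : (-(α : ℂ) * μ).re = -(α * μ.re) := by simp
    rw [this]
    exact Real.exp_lt_one_iff.mpr (by nlinarith)
  have hdne : d ≠ 0 := by
    intro h
    have h2 : ((α : ℂ) - β) * E ^ 2 = -((α : ℂ) + β) := by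
      rw [hd] at h; linear_combination h
    have habs := congrArg (‖·‖) h2
    simp only [norm_mul, norm_neg, norm_pow] at habs
    have h3 : ‖((α : ℂ) - β)‖ = |α - β| := by
      rw [← Complex.ofReal_sub, Complex.norm_real, Real.norm_eq_abs]
    have h4 : ‖((α : ℂ) + β)‖ = α + β := by
      rw [← Complex.ofReal_add, Complex.norm_real, Real.norm_eq_abs, abs_of_pos (by linarith)]
    rw [h3, h4] at habs
    have hE0 : (0 : ℝ) ≤ ‖E‖ := norm_nonneg _
    have hE2 : ‖E‖ ^ 2 ≤ 1 := by nlinarith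
    have h5 : |α - β| * ‖E‖ ^ 2 ≤ |α - β| := by
      nlinarith [abs_nonneg (α - β)]
    have h6 : |α - β| < α + β := abs_sub_lt_iff.mpr ⟨by linarith, by linarith⟩
    linarith
  refine ⟨⟨((α : ℂ) + β) * φ / d, ((α : ℂ) - β) * E * φ / d,
      E * (((α : ℂ) + β) * φ / d) + ((α : ℂ) - β) * E * φ / d⟩, ⟨?_, ?_, ?_⟩, ?_⟩
  · field_simp
    ring
  · ring
  · field_simp
    ring
  · rintro ⟨c1, c2, c3⟩ ⟨h1, h2, h3⟩
    dsimp only at h1 h2 h3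
    have hc1 : c1 = ((α : ℂ) + β) * φ / d := by
      field_simp
      linear_combination ((α : ℂ) + β) * h1 - E * h3 - (β : ℂ) * E * h2
    have hc2 : c2 = ((α : ℂ) - β) * E * φ / d := by
      field_simp
      linear_combination ((α : ℂ) - β) * E * h1 + h3 + (β : ℂ) * h2
    have hc3 : c3 = E * (((α : ℂ) + β) * φ / d) + ((α : ℂ) - β) * E * φ / d := by
      rw [← h2, hc1, hc2]
    simp only [Prod.mk.injEq]
    exact ⟨hc1, hc2, hc3⟩
end

section
/- Let α, β > 0, let λ ∈ ℂ with Re λ > 0, let φ ∈ ℂ, and let (c₁, c₂, c₃) be the unique solution of the system c₁ + e^{-αλ} c₂ = φ, e^{-αλ} c₁ + c₂ = c₃, −α e^{-αλ} c₁ + α c₂ = −β c₃. Define u₀ : [0, ∞) → ℂ by u₀(t) = c₁ e^{−αλt} + c₂ e^{−αλ(1−t)} for t ∈ [0, 1] and u₀(t) = c₃ e^{βλ(1−t)} for t ≥ 1. Then: (i) u₀ is continuous on [0, ∞) and continuously differentiable on (0, ∞); (ii) u₀(0) = φ; (iii) u₀''(t) = ρ(t)λ² u₀(t) for all t ∈ (0,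 1) ∪ (1, ∞), where ρ(t) = α² on (0,1) and ρ(t) = β² on (1,∞); (iv) u₀ and the function t ↦ ρ(t)λ²u₀(t) are square-integrable on (0, ∞). -/
open Complex MeasureTheory Set

/-- Properties of the piecewise regular solution ansatz u₀ built from the
solution (c₁, c₂, c₃) of the boundary-matching system: u₀ is continuous on
[0, ∞) and continuously differentiable on (0, ∞), satisfies u₀(0) = φ, solves
u₀'' = ρ(t)λ²u₀ on (0,1) ∪ (1,∞) where ρ = α² on (0,1) and β² on (1,∞), and
both u₀ and ρλ²u₀ are square-integrable on (0, ∞). -/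
theorem piecewise_ansatz_is_regular_solution
    (α β : ℝ) (hα : 0 < α) (hβ : 0 < β) (lam : ℂ) (hlam : 0 < lam.re) (φ : ℂ)
    (c₁ c₂ c₃ : ℂ)
    (h1 : c₁ + Complex.exp (-(α : ℂ) * lam) * c₂ = φ)
    (h2 : Complex.exp (-(α : ℂ) * lam) * c₁ + c₂ = c₃)
    (h3 : -(α : ℂ) * Complex.exp (-(α : ℂ) * lam) * c₁ + (α : ℂ) * c₂ = -(β : ℂ) * c₃)
    (u₀ : ℝ → ℂ)
    (hdef₁ : ∀ t ∈ Set.Icc (0 : ℝ) 1,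
      u₀ t = c₁ * Complex.exp (-(α : ℂ) * lam * t)
           + c₂ * Complex.exp (-(α : ℂ) * lam * (1 - t)))
    (hdef₂ : ∀ t : ℝ, 1 ≤ t → u₀ t = c₃ * Complex.exp ((β : ℂ) * lam * (1 - t))) :
    -- (i) continuity on [0, ∞) and continuous differentiability on (0, ∞),
    -- together with (iii) u₀'' = ρ(t)λ²u₀ on (0,1) ∪ (1,∞)
    (ContinuousOn u₀ (Set.Ici (0 : ℝ)) ∧
      ∃ v : ℝ → ℂ,
        (∀ t ∈ Set.Ioi (0 : ℝ), HasDerivAt u₀ (v t) t) ∧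
        ContinuousOn v (Set.Ioi (0 : ℝ)) ∧
        (∀ t ∈ Set.Ioo (0 : ℝ) 1 ∪ Set.Ioi (1 : ℝ),
          HasDerivAt v ((if t < 1 then ((α : ℂ) ^ 2) else ((β : ℂ) ^ 2)) * lam ^ 2 * u₀ t) t)) ∧
    -- (ii) the boundary condition
    u₀ 0 = φ ∧
    -- (iv) square-integrability of u₀ and of ρ(t)λ²u₀ on (0, ∞)
    MeasureTheory.IntegrableOn (fun t => ‖u₀ t‖ ^ 2) (Set.Ioi (0 : ℝ)) ∧
    MeasureTheory.IntegrableOn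
      (fun t => ‖(if t < 1 then ((α : ℂ) ^ 2) else ((β : ℂ) ^ 2)) * lam ^ 2 * u₀ t‖ ^ 2)
      (Set.Ioi (0 : ℝ)) := by
  set A : ℂ := -(α : ℂ) * lam with hA
  set B : ℂ := (β : ℂ) * lam with hB
  set f₁ : ℝ → ℂ := fun s => c₁ * Complex.exp (A * s) + c₂ * Complex.exp (A * (1 - s)) with hf₁
  set f₂ : ℝ → ℂ := fun s => c₃ * Complex.exp (B * (1 - s)) with hf₂
  set g₁ : ℝ → ℂ := fun s => A * (c₁ * Complex.exp (A * s)) - A * (c₂ * Complex.exp (A * (1 - s))) with hg₁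
  set g₂ : ℝ → ℂ := fun s => -B * (c₃ * Complex.exp (B * (1 - s))) with hg₂
  -- basic derivative facts
  have hid : ∀ t : ℝ, HasDerivAt (fun s : ℝ => (s : ℂ)) 1 t := fun t => by
    simpa using (hasDerivAt_id t).ofReal_comp
  have hexp : ∀ (c : ℂ) (t : ℝ),
      HasDerivAt (fun s : ℝ => Complex.exp (c * s)) (c * Complex.exp (c * t)) t := by
    intro c t
    simpa [mul_comm] using (((hid t).const_mul c).cexp)
  have hexp' : ∀ (c : ℂ) (t : ℝ),
      HasDerivAt (fun s : ℝ => Complex.exp (c * (1 - s))) (-(c * Complex.exp (c * (1 - t)))) t := by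
    intro c t
    have h0 : HasDerivAt (fun s : ℝ => ((1 : ℂ) - s)) (-1) t := by
      simpa using (hid t).const_sub 1
    simpa [mul_comm, mul_assoc] using ((h0.const_mul c).cexp)
  have hf₁d : ∀ t : ℝ, HasDerivAt f₁ (g₁ t) t := by
    intro t
    have := (((hexp A t).const_mul c₁)).add (((hexp' A t).const_mul c₂))
    convert this using 1
    all_goals first | rfl | (simp only [hg₁]; ring) | ring
  have hf₂d : ∀ t : ℝ, HasDerivAt f₂ (g₂ t) t := by
    intro t
    have := (hexp' B t).const_mul c₃
    simpa [hf₂, hg₂, mul_comm, mul_left_comm, mul_assoc] using this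
  have hg₁d : ∀ t : ℝ, HasDerivAt g₁ ((A ^ 2) * f₁ t) t := by
    intro t
    have h := (((hexp A t).const_mul c₁).const_mul A).sub (((hexp' A t).const_mul c₂).const_mul A)
    convert h using 1
    all_goals first | rfl | (simp only [hf₁]; ring) | ring
  have hg₂d : ∀ t : ℝ, HasDerivAt g₂ ((B ^ 2) * f₂ t) t := by
    intro t
    have h := ((hexp' B t).const_mul c₃).const_mul (-B)
    convert h using 1
    all_goals first | rfl | (simp only [hf₂]; ring) | ring
  -- matching values at 1
  rw [hA] at h1 h2 h3
  have hmatch : f₁ 1 = f₂ 1 := by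
    simp only [hf₁, hf₂]
    push_cast
    simp only [sub_self, mul_zero, mul_one, Complex.exp_zero]
    linear_combination h2
  have hgmatch : g₁ 1 = g₂ 1 := by
    simp only [hg₁, hg₂]
    push_cast
    simp only [sub_self, mul_zero, mul_one, Complex.exp_zero]
    rw [hA, hB]
    linear_combination lam * h3
  have hcf₁ : Continuous f₁ := by fun_prop
  have hcf₂ : Continuous f₂ := by fun_prop
  have hcg₁ : Continuous g₁ := by fun_prop
  have hcg₂ : Continuous g₂ := by fun_prop
  -- u₀ agrees with f₁ / f₂
  have hu₁ : ∀ t ∈ Set.Icc (0 : ℝ) 1, u₀ t = f₁ t := by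
    intro t ht; rw [hdef₁ t ht]
  have hu₂ : ∀ t : ℝ, 1 ≤ t → u₀ t = f₂ t := by
    intro t ht; rw [hdef₂ t ht]
  set v : ℝ → ℂ := fun s => if s ≤ 1 then g₁ s else g₂ s with hv
  have hcv : Continuous v := by
    apply Continuous.if_le hcg₁ hcg₂ continuous_id continuous_const
    intro x hx; rw [show x = 1 from hx, hgmatch]
  -- continuity of u₀ on Ici 0
  have hU : Continuous (fun s : ℝ => if s ≤ 1 then f₁ s else f₂ s) := by
    apply Continuous.if_le hcf₁ hcf₂ continuous_id continuous_const
    intro x hx; rw [show x = 1 from hx, hmatch]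
  have hcont : ContinuousOn u₀ (Set.Ici (0 : ℝ)) := by
    apply hU.continuousOn.congr
    intro t ht
    by_cases h : t ≤ 1
    · simp [h, hu₁ t ⟨ht, h⟩]
    · simp [h, hu₂ t (le_of_not_ge h)]
  -- derivative of u₀ on Ioi 0
  have hderiv : ∀ t ∈ Set.Ioi (0 : ℝ), HasDerivAt u₀ (v t) t := by
    intro t ht
    rcases lt_trichotomy t 1 with h | h | h
    · have hmem : Set.Ioo (0 : ℝ) 1 ∈ nhds t := Ioo_mem_nhds ht h
      have : HasDerivAt u₀ (g₁ t) t := by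
        apply (hf₁d t).congr_of_eventuallyEq
        filter_upwards [hmem] with s hs using hu₁ s ⟨le_of_lt hs.1, le_of_lt hs.2⟩
      simpa [hv, le_of_lt h] using this
    · subst h
      have hL : HasDerivWithinAt u₀ (g₁ 1) (Set.Iic 1) 1 := by
        have h0 : HasDerivWithinAt f₁ (g₁ 1) (Set.Icc 0 1) 1 := (hf₁d 1).hasDerivWithinAt
        have h1' : HasDerivWithinAt u₀ (g₁ 1) (Set.Icc 0 1) 1 :=
          h0.congr hu₁ (hu₁ 1 ⟨zero_le_one, le_refl 1⟩)
        exact h1'.mono_of_mem_nhdsWithin <| by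
          rw [mem_nhdsWithin_iff_exists_mem_nhds_inter]
          exact ⟨Set.Ioi 0, Ioi_mem_nhds one_pos, by
            intro x hx; exact ⟨le_of_lt hx.1, hx.2⟩⟩
      have hR : HasDerivWithinAt u₀ (g₁ 1) (Set.Ici 1) 1 := by
        have h0 : HasDerivWithinAt f₂ (g₂ 1) (Set.Ici 1) 1 := (hf₂d 1).hasDerivWithinAt
        rw [hgmatch]
        exact h0.congr (fun s hs => hu₂ s hs) (hu₂ 1 (le_refl 1))
      have := (hL.union hR)
      rw [Set.Iic_union_Ici, hasDerivWithinAt_univ] at this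
      simpa [hv] using this
    · have hmem : Set.Ioi (1 : ℝ) ∈ nhds t := Ioi_mem_nhds h
      have : HasDerivAt u₀ (g₂ t) t := by
        apply (hf₂d t).congr_of_eventuallyEq
        filter_upwards [hmem] with s hs using hu₂ s (le_of_lt hs)
      simpa [hv, not_le.mpr h] using this
  -- second derivative
  have hderiv2 : ∀ t ∈ Set.Ioo (0 : ℝ) 1 ∪ Set.Ioi (1 : ℝ),
      HasDerivAt v ((if t < 1 then ((α : ℂ) ^ 2) else ((β : ℂ) ^ 2)) * lam ^ 2 * u₀ t) t := by
    rintro t (ht | ht)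
    · have hmem : Set.Ioo (0 : ℝ) 1 ∈ nhds t := Ioo_mem_nhds ht.1 ht.2
      have hd : HasDerivAt v ((A ^ 2) * f₁ t) t := by
        apply (hg₁d t).congr_of_eventuallyEq
        filter_upwards [hmem] with s hs
        simp [hv, le_of_lt hs.2]
      have he : (A ^ 2) * f₁ t = ((α : ℂ) ^ 2) * lam ^ 2 * u₀ t := by
        rw [← hu₁ t ⟨le_of_lt ht.1, le_of_lt ht.2⟩, hA]; ring
      rw [he] at hd
      simpa [ht.2] using hd
    · have hmem : Set.Ioi (1 : ℝ) ∈ nhds t := Ioi_mem_nhds ht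
      have hd : HasDerivAt v ((B ^ 2) * f₂ t) t := by
        apply (hg₂d t).congr_of_eventuallyEq
        filter_upwards [hmem] with s hs
        simp [hv, not_le.mpr (Set.mem_Ioi.mp hs)]
      have he : (B ^ 2) * f₂ t = ((β : ℂ) ^ 2) * lam ^ 2 * u₀ t := by
        rw [← hu₂ t (le_of_lt (Set.mem_Ioi.mp ht)), hB]; ring
      rw [he] at hd
      simpa [not_lt.mpr (le_of_lt (Set.mem_Ioi.mp ht))] using hd
  -- boundary condition
  have hbc : u₀ 0 = φ := by
    rw [hdef₁ 0 ⟨le_refl 0, zero_le_one⟩]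
    push_cast
    simp only [mul_zero, Complex.exp_zero, mul_one, sub_zero]
    linear_combination h1
  -- norm on the tail
  have hb : (0 : ℝ) < 2 * β * lam.re := by positivity
  have htail : ∀ t : ℝ, ‖f₂ t‖ ^ 2
      = (‖c₃‖ ^ 2 * Real.exp (2 * β * lam.re)) * Real.exp (-(2 * β * lam.re) * t) := by
    intro t
    have : ‖f₂ t‖ ^ 2 = ‖c₃‖ ^ 2 * Real.exp ((B * (1 - (t : ℂ))).re) ^ 2 := by
      simp [hf₂, norm_mul, Complex.norm_exp, mul_pow]
    rw [this]
    have hre : (B * (1 - (t : ℂ))).re = β * lam.re * (1 - t) := by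
      simp [hB, Complex.mul_re, Complex.sub_re, Complex.sub_im, Complex.ofReal_re,
        Complex.ofReal_im]
    have hexp2 : Real.exp (β * lam.re * (1 - t)) ^ 2
        = Real.exp (2 * β * lam.re) * Real.exp (-(2 * β * lam.re) * t) := by
      rw [sq, ← Real.exp_add, ← Real.exp_add]
      congr 1
      ring
    rw [hre, hexp2]
    ring
  have htail_int : IntegrableOn (fun t => ‖f₂ t‖ ^ 2) (Set.Ici (1 : ℝ)) := by
    have := ((exp_neg_integrableOn_Ioi 1 hb).const_mul (‖c₃‖ ^ 2 * Real.exp (2 * β * lam.re)))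
    have h2 : IntegrableOn
        (fun t => (‖c₃‖ ^ 2 * Real.exp (2 * β * lam.re)) * Real.exp (-(2 * β * lam.re) * t))
        (Set.Ici (1 : ℝ)) := (integrableOn_Ici_iff_integrableOn_Ioi).mpr this
    exact h2.congr_fun (fun t _ => (htail t).symm) measurableSet_Ici
  -- square integrability of u₀
  have hsplit : Set.Ioi (0 : ℝ) = Set.Ioo 0 1 ∪ Set.Ici 1 :=
    (Set.Ioo_union_Ici_eq_Ioi zero_lt_one).symm
  have hint1 : IntegrableOn (fun t => ‖u₀ t‖ ^ 2) (Set.Ioi (0 : ℝ)) := by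
    rw [hsplit]
    apply IntegrableOn.union
    · have : IntegrableOn (fun t => ‖f₁ t‖ ^ 2) (Set.Ioo (0 : ℝ) 1) :=
        ((hcf₁.norm.pow 2).continuousOn.integrableOn_Icc).mono_set Set.Ioo_subset_Icc_self
      exact this.congr_fun
        (fun t ht => by rw [hu₁ t ⟨le_of_lt ht.1, le_of_lt ht.2⟩]) measurableSet_Ioo
    · exact htail_int.congr_fun (fun t ht => by rw [hu₂ t ht]) measurableSet_Ici
  have hint2 : IntegrableOn
      (fun t => ‖(if t < 1 then ((α : ℂ) ^ 2) else ((β : ℂ) ^ 2)) * lam ^ 2 * u₀ t‖ ^ 2)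
      (Set.Ioi (0 : ℝ)) := by
    rw [hsplit]
    apply IntegrableOn.union
    · have : IntegrableOn (fun t => ‖((α : ℂ) ^ 2) * lam ^ 2 * f₁ t‖ ^ 2) (Set.Ioo (0 : ℝ) 1) :=
        (((continuous_const.mul hcf₁).norm.pow 2).continuousOn.integrableOn_Icc).mono_set
          Set.Ioo_subset_Icc_self
      exact this.congr_fun
        (fun t ht => by rw [hu₁ t ⟨le_of_lt ht.1, le_of_lt ht.2⟩, if_pos ht.2]) measurableSet_Ioo
    · have h0 : IntegrableOn (fun t => ‖((β : ℂ) ^ 2) * lam ^ 2‖ ^ 2 * ‖f₂ t‖ ^ 2)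
          (Set.Ici (1 : ℝ)) := htail_int.const_mul _
      apply h0.congr_fun (fun t ht => ?_) measurableSet_Ici
      rw [hu₂ t ht, if_neg (not_lt.mpr ht)]
      simp [norm_mul, mul_pow, mul_assoc]
  exact ⟨⟨hcont, v, hderiv, hcv.continuousOn, hderiv2⟩, hbc, hint1, hint2⟩
end

section
/- Let α, β > 0, let λ ∈ ℂ with Re λ > 0, and let φ ∈ ℂ. Then there exists exactly one function u : [0, ∞) → ℂ such that: u is continuous on [0, ∞) with u(0) = φ; u is continuously differentiable on (0, ∞); u is twice differentiable on (0,1) ∪ (1,∞) with u''(t) = ρ(t)λ² u(t) there, where ρ(t) = α² on (0,1) and ρ(t) = β² on (1,∞); and u is square-integrable on (0, ∞). -/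
open Complex MeasureTheory Set
open Filter Topology

lemma hasDerivAt_expc (c : ℂ) (t : ℝ) :
    HasDerivAt (fun t : ℝ => Complex.exp (c * t)) (c * Complex.exp (c * t)) t := by
  have h1 : HasDerivAt (fun t : ℝ => (c * t : ℂ)) c t := by
    simpa using ((hasDerivAt_id t).ofReal_comp.const_mul c)
  simpa [mul_comm] using h1.cexp

lemma const_of_hasDerivAt_zero {s : Set ℝ} (hs : IsOpen s) (hc : Convex ℝ s) {f : ℝ → ℂ}
    (h : ∀ t ∈ s, HasDerivAt f 0 t) {x y : ℝ} (hx : x ∈ s) (hy : y ∈ s) : f x = f y := by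
  refine hc.is_const_of_fderivWithin_eq_zero
    (fun t ht => ((h t ht).differentiableAt).differentiableWithinAt) (fun t ht => ?_) hx hy
  rw [fderivWithin_of_isOpen hs ht, (h t ht).hasFDerivAt.fderiv]
  ext
  simp

lemma rep {μ : ℂ} (hμ : μ ≠ 0) {s : Set ℝ} (hs : IsOpen s) (hc : Convex ℝ s)
    {t0 : ℝ} (ht0 : t0 ∈ s) {f g : ℝ → ℂ}
    (hf : ∀ t ∈ s, HasDerivAt f (g t) t)
    (hg : ∀ t ∈ s, HasDerivAt g (μ ^ 2 * f t) t) :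
    ∃ a b : ℂ, ∀ t ∈ s, f t = a * Complex.exp (μ * t) + b * Complex.exp (-μ * t) ∧
      g t = μ * (a * Complex.exp (μ * t) - b * Complex.exp (-μ * t)) := by
  have hF1 : ∀ t ∈ s, HasDerivAt (fun t : ℝ => Complex.exp (μ * t) * (g t - μ * f t)) 0 t := by
    intro t ht
    have := (hasDerivAt_expc μ t).mul ((hg t ht).sub ((hf t ht).const_mul μ))
    convert this using 1
    all_goals first
      | rfl
      | (show (0:ℂ) = μ * cexp (μ * ↑t) * (g t - μ * f t) + cexp (μ * ↑t) * (μ ^ 2 * f t - μ * g t)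
         ring)
  have hF2 : ∀ t ∈ s, HasDerivAt (fun t : ℝ => Complex.exp (-μ * t) * (g t + μ * f t)) 0 t := by
    intro t ht
    have := (hasDerivAt_expc (-μ) t).mul ((hg t ht).add ((hf t ht).const_mul μ))
    convert this using 1
    all_goals first
      | rfl
      | (show (0:ℂ) = -μ * cexp (-μ * ↑t) * (g t + μ * f t) + cexp (-μ * ↑t) * (μ ^ 2 * f t + μ * g t)
         ring)
  refine ⟨Complex.exp (-μ * t0) * (g t0 + μ * f t0) / (2 * μ),
    -(Complex.exp (μ * t0) * (g t0 - μ * f t0)) / (2 * μ), fun t ht => ?_⟩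
  have e1 : Complex.exp (μ * t) * (g t - μ * f t)
      = Complex.exp (μ * t0) * (g t0 - μ * f t0) :=
    const_of_hasDerivAt_zero hs hc hF1 ht ht0
  have e2 : Complex.exp (-μ * t) * (g t + μ * f t)
      = Complex.exp (-μ * t0) * (g t0 + μ * f t0) :=
    const_of_hasDerivAt_zero hs hc hF2 ht ht0
  have hE : Complex.exp (μ * t) * Complex.exp (-μ * t) = 1 := by
    rw [← Complex.exp_add]
    norm_num
  simp only [neg_mul] at e1 e2 hE ⊢
  constructor
  · field_simp
    linear_combination (Complex.exp (μ * (t:ℂ))) * e2 - (Complex.exp (-(μ * (t:ℂ)))) * e1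
      - 2 * μ * f t * hE
  · field_simp
    linear_combination (Complex.exp (μ * (t:ℂ))) * e2 + (Complex.exp (-(μ * (t:ℂ)))) * e1
      - 2 * g t * hE

lemma eq_of_tendsto_boundary {w : ℝ → ℂ} {S s : Set ℝ} {x : ℝ} (hw : ContinuousOn w S)
    (hx : x ∈ S) (hsS : s ⊆ S) (hxc : x ∈ closure s) {c : ℂ}
    (h : Tendsto w (𝓝[s] x) (𝓝 c)) : w x = c := by
  haveI := mem_closure_iff_nhdsWithin_neBot.mp hxc
  exact tendsto_nhds_unique (((hw x hx).mono hsS)) h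

lemma tendsto_of_eqOn {w F : ℝ → ℂ} {s : Set ℝ} {x : ℝ} (hF : Continuous F)
    (heq : ∀ t ∈ s, w t = F t) : Tendsto w (𝓝[s] x) (𝓝 (F x)) := by
  refine Filter.Tendsto.congr' ?_ ((hF.tendsto x).mono_left nhdsWithin_le_nhds)
  filter_upwards [self_mem_nhdsWithin] with t ht using (heq t ht).symm

lemma shape {α β : ℝ} (hα : 0 < α) (hβ : 0 < β) {lam : ℂ} (hlam : 0 < lam.re)
    {w v : ℝ → ℂ}
    (hwc : ContinuousOn w (Ici 0))
    (hwv : ∀ t ∈ Ioi (0:ℝ), HasDerivAt w (v t) t)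
    (hvc : ContinuousOn v (Ioi 0))
    (hode : ∀ t ∈ Ioo (0:ℝ) 1 ∪ Ioi 1,
      HasDerivAt v ((if t < 1 then ((α : ℂ) ^ 2) else ((β : ℂ) ^ 2)) * lam ^ 2 * w t) t)
    (hL2 : IntegrableOn (fun t => ‖w t‖ ^ 2) (Ioi 0)) :
    ∃ a b c : ℂ,
      (∀ t ∈ Icc (0:ℝ) 1,
        w t = a * Complex.exp ((α:ℂ)*lam * t) + b * Complex.exp (-((α:ℂ)*lam) * t)) ∧
      (∀ t ∈ Ici (1:ℝ), w t = c * Complex.exp (-((β:ℂ)*lam) * t)) ∧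
      a * Complex.exp ((α:ℂ)*lam) + b * Complex.exp (-((α:ℂ)*lam))
        = c * Complex.exp (-((β:ℂ)*lam)) ∧
      (α:ℂ)*lam * (a * Complex.exp ((α:ℂ)*lam) - b * Complex.exp (-((α:ℂ)*lam)))
        = -((β:ℂ)*lam) * (c * Complex.exp (-((β:ℂ)*lam))) := by
  have hlam0 : lam ≠ 0 := by
    intro h; rw [h] at hlam; simp at hlam
  set z : ℂ := (α:ℂ)*lam with hz_def
  set zb : ℂ := (β:ℂ)*lam with hzb_def
  have hz : z ≠ 0 := mul_ne_zero (ofReal_ne_zero.mpr hα.ne') hlam0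
  have hzb : zb ≠ 0 := mul_ne_zero (ofReal_ne_zero.mpr hβ.ne') hlam0
  -- representation on (0,1)
  have hf1 : ∀ t ∈ Ioo (0:ℝ) 1, HasDerivAt w (v t) t := fun t ht => hwv t ht.1
  have hg1 : ∀ t ∈ Ioo (0:ℝ) 1, HasDerivAt v (z ^ 2 * w t) t := by
    intro t ht
    have h := hode t (Or.inl ht)
    rw [if_pos ht.2, ← mul_pow] at h
    exact h
  obtain ⟨a, b, hab⟩ := rep hz isOpen_Ioo (convex_Ioo _ _)
    (show (1/2 : ℝ) ∈ Ioo (0:ℝ) 1 by norm_num) hf1 hg1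
  -- representation on (1,∞)
  have hf2 : ∀ t ∈ Ioi (1:ℝ), HasDerivAt w (v t) t := fun t ht =>
    hwv t (lt_trans zero_lt_one (mem_Ioi.1 ht))
  have hg2 : ∀ t ∈ Ioi (1:ℝ), HasDerivAt v (zb ^ 2 * w t) t := by
    intro t ht
    have h := hode t (Or.inr ht)
    rw [if_neg (not_lt.mpr (le_of_lt ht)), ← mul_pow] at h
    exact h
  obtain ⟨a', b', hab'⟩ := rep hzb isOpen_Ioi (convex_Ioi _)
    (show (2:ℝ) ∈ Ioi (1:ℝ) by norm_num) hf2 hg2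
  -- a' = 0 from square integrability
  have hbr : 0 < β * lam.re := mul_pos hβ hlam
  have ha' : a' = 0 := by
    by_contra ha'
    have hT : Tendsto (fun t : ℝ => -(‖b'‖ * Real.exp (-(β * lam.re * t)))
        + ‖a'‖ * Real.exp (β * lam.re * t)) atTop atTop := by
      apply Filter.Tendsto.add_atTop
      · have h1 : Tendsto (fun t : ℝ => -(β * lam.re * t)) atTop atBot :=
          tendsto_neg_atTop_atBot.comp (tendsto_id.const_mul_atTop hbr)
        have := (Real.tendsto_exp_atBot.comp h1).const_mul ‖b'‖
        simpa [Function.comp_def] using this.neg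
      · exact Tendsto.const_mul_atTop (norm_pos_iff.mpr ha')
          (Real.tendsto_exp_atTop.comp (tendsto_id.const_mul_atTop hbr))
    have hev : ∀ᶠ t : ℝ in atTop, 1 ≤ ‖w t‖ ^ 2 ∧ 1 < t := by
      filter_upwards [hT.eventually_ge_atTop 1, eventually_gt_atTop (1:ℝ)] with t h1 h2
      refine ⟨?_, h2⟩
      have hw : w t = a' * Complex.exp (zb * t) + b' * Complex.exp (-zb * t) :=
        (hab' t h2).1
      have hre : (zb * (t:ℂ)).re = β * lam.re * t := by
        rw [Complex.mul_re, Complex.ofReal_re, Complex.ofReal_im, hzb_def,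
          Complex.re_ofReal_mul]
        ring
      have hre' : (-zb * (t:ℂ)).re = -(β * lam.re * t) := by
        rw [neg_mul, Complex.neg_re, hre]
      have hn1 : ‖a' * Complex.exp (zb * (t:ℂ))‖ = ‖a'‖ * Real.exp (β * lam.re * t) := by
        rw [norm_mul, Complex.norm_exp, hre]
      have hn2 : ‖b' * Complex.exp (-zb * (t:ℂ))‖ = ‖b'‖ * Real.exp (-(β * lam.re * t)) := by
        rw [norm_mul, Complex.norm_exp, hre']
      have htri : ‖a' * Complex.exp (zb * (t:ℂ))‖ - ‖b' * Complex.exp (-zb * (t:ℂ))‖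
          ≤ ‖w t‖ := by
        rw [hw]
        have := norm_sub_norm_le (a' * Complex.exp (zb * (t:ℂ)))
          (-(b' * Complex.exp (-zb * (t:ℂ))))
        simpa [sub_neg_eq_add] using this
      rw [hn1, hn2] at htri
      nlinarith [norm_nonneg (w t)]
    obtain ⟨M, hM⟩ := eventually_atTop.mp hev
    set M' : ℝ := max M 2 with hM'_def
    have hI0 : Ioi M' ⊆ Ioi (0:ℝ) := Ioi_subset_Ioi (by positivity)
    have hint : IntegrableOn (fun _ : ℝ => (1:ℝ)) (Ioi M') := by
      apply Integrable.mono' (hL2.mono_set hI0)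
      · exact aestronglyMeasurable_const
      · rw [ae_restrict_iff' measurableSet_Ioi]
        filter_upwards with t ht
        have := (hM t (le_trans (le_max_left M 2) (le_of_lt ht))).1
        simpa using this
      
    rw [integrableOn_const_iff] at hint
    rcases hint with h | h
    · norm_num at h
    · rw [Real.volume_Ioi] at h
      exact (lt_irrefl _ h).elim
  -- the right piece formula, now with a' = 0
  have hri : ∀ t ∈ Ioi (1:ℝ), w t = b' * Complex.exp (-zb * t) := by
    intro t ht
    have := (hab' t ht).1
    rw [ha'] at this
    simpa using this
  have hri' : ∀ t ∈ Ioi (1:ℝ), v t = -(zb * (b' * Complex.exp (-zb * t))) := by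
    intro t ht
    have := (hab' t ht).2
    rw [ha'] at this
    rw [this]; ring
  -- continuity matching at t = 1 and endpoints
  have hFc : Continuous (fun t : ℝ => a * Complex.exp (z * t) + b * Complex.exp (-z * t)) := by
    fun_prop
  have hGc : Continuous (fun t : ℝ =>
      z * (a * Complex.exp (z * t) - b * Complex.exp (-z * t))) := by
    fun_prop
  have hF2c : Continuous (fun t : ℝ => b' * Complex.exp (-zb * t)) := by fun_prop
  have hG2c : Continuous (fun t : ℝ => -(zb * (b' * Complex.exp (-zb * t)))) := by fun_prop
  have hc01 : (Ioo (0:ℝ) 1) ⊆ Ici (0:ℝ) := fun t ht => le_of_lt ht.1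
  have hcl0 : (0:ℝ) ∈ closure (Ioo (0:ℝ) 1) := by
    rw [closure_Ioo (by norm_num : (0:ℝ) ≠ 1)]
    exact ⟨le_refl _, zero_le_one⟩
  have hcl1 : (1:ℝ) ∈ closure (Ioo (0:ℝ) 1) := by
    rw [closure_Ioo (by norm_num : (0:ℝ) ≠ 1)]
    exact ⟨zero_le_one, le_refl _⟩
  have hcl1' : (1:ℝ) ∈ closure (Ioi (1:ℝ)) := by
    rw [closure_Ioi]; exact Set.self_mem_Ici
  -- value of w at 0 and 1 from the left formula
  have hw0 : w 0 = a * Complex.exp (z * (0:ℝ)) + b * Complex.exp (-z * (0:ℝ)) :=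
    eq_of_tendsto_boundary hwc Set.self_mem_Ici hc01 hcl0
      (tendsto_of_eqOn hFc (fun t ht => (hab t ht).1))
  have hw1 : w 1 = a * Complex.exp (z * (1:ℝ)) + b * Complex.exp (-z * (1:ℝ)) :=
    eq_of_tendsto_boundary hwc (by norm_num) hc01 hcl1
      (tendsto_of_eqOn hFc (fun t ht => (hab t ht).1))
  have hv1 : v 1 = z * (a * Complex.exp (z * (1:ℝ)) - b * Complex.exp (-z * (1:ℝ))) :=
    eq_of_tendsto_boundary hvc (by norm_num) (fun t ht => ht.1) hcl1
      (tendsto_of_eqOn hGc (fun t ht => (hab t ht).2))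
  have hw1' : w 1 = b' * Complex.exp (-zb * (1:ℝ)) :=
    eq_of_tendsto_boundary hwc (by norm_num) (fun t (ht : t ∈ Ioi (1:ℝ)) =>
      le_of_lt (lt_trans zero_lt_one (mem_Ioi.1 ht))) hcl1' (tendsto_of_eqOn hF2c hri)
  have hv1' : v 1 = -(zb * (b' * Complex.exp (-zb * (1:ℝ)))) :=
    eq_of_tendsto_boundary hvc (by norm_num) (fun t (ht : t ∈ Ioi (1:ℝ)) =>
      lt_trans zero_lt_one (mem_Ioi.1 ht)) hcl1' (tendsto_of_eqOn hG2c hri')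
  refine ⟨a, b, b', ?_, ?_, ?_, ?_⟩
  · intro t ht
    rcases eq_or_lt_of_le ht.1 with h0 | h0
    · rw [← h0]; exact hw0
    · rcases eq_or_lt_of_le ht.2 with h1 | h1
      · rw [h1]; exact hw1
      · exact (hab t ⟨h0, h1⟩).1
  · intro t ht
    rcases eq_or_lt_of_le (mem_Ici.1 ht) with h1 | h1
    · rw [← h1]; exact hw1'
    · exact hri t h1
  · have := hw1.symm.trans hw1'
    simpa using this
  · have := hv1.symm.trans hv1'
    simpa using this

lemma K_ne_zero {α β : ℝ} (hα : 0 < α) (hβ : 0 < β) {lam : ℂ} (hlam : 0 < lam.re) :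
    ((α:ℂ)+β) * Complex.exp ((α:ℂ)*lam) + ((α:ℂ)-β) * Complex.exp (-((α:ℂ)*lam)) ≠ 0 := by
  intro h
  set z : ℂ := (α:ℂ)*lam with hz_def
  have h' : ((↑(α+β):ℂ)) * Complex.exp z = ((↑(β-α):ℂ)) * Complex.exp (-z) := by
    push_cast
    linear_combination h
  have habs := congrArg (fun x : ℂ => ‖x‖) h'
  rw [norm_mul, norm_mul, Complex.norm_real, Complex.norm_real, Real.norm_eq_abs,
    Real.norm_eq_abs, Complex.norm_exp, Complex.norm_exp] at habs
  have hzre : 0 < z.re := by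
    rw [hz_def, Complex.re_ofReal_mul]; positivity
  have h1 : Real.exp ((-z).re) < Real.exp z.re := by
    apply Real.exp_lt_exp.mpr
    rw [Complex.neg_re]; linarith
  have h2 : |β - α| < α + β := abs_lt.mpr ⟨by linarith, by linarith⟩
  rw [abs_of_pos (by linarith : (0:ℝ) < α + β)] at habs
  nlinarith [Real.exp_pos ((-z).re), Real.exp_pos z.re, abs_nonneg (β - α)]


/-- Scalar regular solvability: for α, β > 0, Re λ > 0 and φ ∈ ℂ there is
exactly one function u on [0, ∞) which is continuous on [0, ∞) with u(0) = φ,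
continuously differentiable on (0, ∞), twice differentiable on (0,1) ∪ (1,∞)
with u'' = ρ(t)λ²u there (ρ = α² on (0,1), β² on (1,∞)), and square-integrable
on (0, ∞). Uniqueness is understood on [0, ∞). -/
theorem scalar_regular_solvability
    (α β : ℝ) (hα : 0 < α) (hβ : 0 < β) (lam : ℂ) (hlam : 0 < lam.re) (φ : ℂ) :
    ∃ u : ℝ → ℂ,
      (ContinuousOn u (Set.Ici (0 : ℝ)) ∧ u 0 = φ ∧
        (∃ v : ℝ → ℂ,
          (∀ t ∈ Set.Ioi (0 : ℝ), HasDerivAt u (v t) t) ∧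
          ContinuousOn v (Set.Ioi (0 : ℝ)) ∧
          (∀ t ∈ Set.Ioo (0 : ℝ) 1 ∪ Set.Ioi (1 : ℝ),
            HasDerivAt v
              ((if t < 1 then ((α : ℂ) ^ 2) else ((β : ℂ) ^ 2)) * lam ^ 2 * u t) t)) ∧
        MeasureTheory.IntegrableOn (fun t => ‖u t‖ ^ 2) (Set.Ioi (0 : ℝ))) ∧
      ∀ w : ℝ → ℂ,
        (ContinuousOn w (Set.Ici (0 : ℝ)) ∧ w 0 = φ ∧
          (∃ v : ℝ → ℂ,
            (∀ t ∈ Set.Ioi (0 : ℝ), HasDerivAt w (v t) t) ∧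
            ContinuousOn v (Set.Ioi (0 : ℝ)) ∧
            (∀ t ∈ Set.Ioo (0 : ℝ) 1 ∪ Set.Ioi (1 : ℝ),
              HasDerivAt v
                ((if t < 1 then ((α : ℂ) ^ 2) else ((β : ℂ) ^ 2)) * lam ^ 2 * w t) t)) ∧
          MeasureTheory.IntegrableOn (fun t => ‖w t‖ ^ 2) (Set.Ioi (0 : ℝ))) →
        ∀ t ∈ Set.Ici (0 : ℝ), w t = u t := by
  have hlam0 : lam ≠ 0 := by
    intro h; rw [h] at hlam; simp at hlam
  set z : ℂ := (α:ℂ)*lam with hz_def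
  set zb : ℂ := (β:ℂ)*lam with hzb_def
  have hz : z ≠ 0 := mul_ne_zero (ofReal_ne_zero.mpr hα.ne') hlam0
  have hzb : zb ≠ 0 := mul_ne_zero (ofReal_ne_zero.mpr hβ.ne') hlam0
  have hK : ((α:ℂ)+β) * Complex.exp z + ((α:ℂ)-β) * Complex.exp (-z) ≠ 0 :=
    K_ne_zero hα hβ hlam
  set a : ℂ := φ * ((α:ℂ)-β) * Complex.exp (-z)
      / (((α:ℂ)+β) * Complex.exp z + ((α:ℂ)-β) * Complex.exp (-z)) with ha_def
  set b : ℂ := φ - a with hb_def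
  have hsum : a + b = φ := by rw [hb_def]; ring
  have hkey : ((α:ℂ)+β) * (a * Complex.exp z) = ((α:ℂ)-β) * (b * Complex.exp (-z)) := by
    rw [hb_def, ha_def]
    field_simp
    ring
  set c0 : ℂ := (a * Complex.exp z + b * Complex.exp (-z)) * Complex.exp zb with hc0_def
  have hval1 : c0 * Complex.exp (-zb) = a * Complex.exp z + b * Complex.exp (-z) := by
    rw [hc0_def, mul_assoc, ← Complex.exp_add]; simp
  have hder1 : z * (a * Complex.exp z - b * Complex.exp (-z))
      = -zb * (c0 * Complex.exp (-zb)) := by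
    rw [hval1, hz_def, hzb_def]
    linear_combination lam * hkey
  set u : ℝ → ℂ := fun t => if t ≤ 1 then a * Complex.exp (z * t) + b * Complex.exp (-z * t)
    else c0 * Complex.exp (-zb * t) with hu_def
  set vf : ℝ → ℂ := fun t => if t ≤ 1 then
      z * (a * Complex.exp (z * t) - b * Complex.exp (-z * t))
    else -zb * (c0 * Complex.exp (-zb * t)) with hv_def
  have hF1d : ∀ t : ℝ, HasDerivAt (fun t : ℝ => a * Complex.exp (z*t) + b * Complex.exp (-z*t))
      (z * (a * Complex.exp (z*t) - b * Complex.exp (-z*t))) t := by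
    intro t
    have h1 := (hasDerivAt_expc z t).const_mul a
    have h2 := (hasDerivAt_expc (-z) t).const_mul b
    have := h1.add h2
    convert this using 1
    all_goals first | rfl | ring
  have hF2d : ∀ t : ℝ, HasDerivAt (fun t : ℝ => c0 * Complex.exp (-zb*t))
      (-zb * (c0 * Complex.exp (-zb*t))) t := by
    intro t
    have := (hasDerivAt_expc (-zb) t).const_mul c0
    convert this using 1; all_goals first | rfl | ring
  -- continuity of u and vf
  have hcu : Continuous u := by
    rw [hu_def]
    refine Continuous.if_le (by fun_prop) (by fun_prop) continuous_id continuous_const ?_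
    intro t ht
    try simp only [id] at ht
    simp only [ht, Complex.ofReal_one, mul_one]
    exact hval1.symm
  have hcv : Continuous vf := by
    rw [hv_def]
    refine Continuous.if_le (by fun_prop) (by fun_prop) continuous_id continuous_const ?_
    intro t ht
    try simp only [id] at ht
    simp only [ht, Complex.ofReal_one, mul_one]
    exact hder1
  -- derivative of u is vf on (0,∞)
  have huder : ∀ t ∈ Ioi (0:ℝ), HasDerivAt u (vf t) t := by
    intro t _
    rcases lt_trichotomy t 1 with h1 | h1 | h1
    · have heq : u =ᶠ[𝓝 t]
          (fun t : ℝ => a * Complex.exp (z*t) + b * Complex.exp (-z*t)) := by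
        filter_upwards [Iio_mem_nhds h1] with s hs
        rw [hu_def]
        simp only [if_pos (le_of_lt (mem_Iio.mp hs))]
      have hD := (hF1d t).congr_of_eventuallyEq heq
      have hvt : vf t = z * (a * Complex.exp (z*t) - b * Complex.exp (-z*t)) := by
        rw [hv_def]; simp only [if_pos (le_of_lt h1)]
      rw [hvt]; exact hD
    · subst h1
      have hvf1 : vf 1 = z * (a * Complex.exp (z*(1:ℝ)) - b * Complex.exp (-z*(1:ℝ))) := by
        rw [hv_def]; simp only [if_pos (le_refl (1:ℝ))]
      have hIic : HasDerivWithinAt u (vf 1) (Iic 1) 1 := by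
        rw [hvf1]
        refine ((hF1d 1).hasDerivWithinAt).congr ?_ ?_
        · intro s hs
          rw [hu_def]; simp only [if_pos (mem_Iic.mp hs)]
        · rw [hu_def]; simp only [if_pos (le_refl (1:ℝ))]
      have hIci : HasDerivWithinAt u (vf 1) (Ici 1) 1 := by
        have hvf1' : vf 1 = -zb * (c0 * Complex.exp (-zb*(1:ℝ))) := by
          rw [hvf1]
          simp only [Complex.ofReal_one, mul_one]
          exact hder1
        rw [hvf1']
        refine ((hF2d 1).hasDerivWithinAt).congr ?_ ?_
        · intro s hs
          rcases eq_or_lt_of_le (mem_Ici.mp hs) with h | h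
          · rw [hu_def]
            simp only [← h, if_pos (le_refl (1:ℝ)), Complex.ofReal_one, mul_one]
            exact hval1.symm
          · rw [hu_def]; simp only [if_neg (not_le.mpr h)]
        · rw [hu_def]
          simp only [if_pos (le_refl (1:ℝ)), Complex.ofReal_one, mul_one]
          exact hval1.symm
      have := hIic.union hIci
      rw [Iic_union_Ici] at this
      exact hasDerivWithinAt_univ.mp this
    · have heq : u =ᶠ[𝓝 t] (fun t : ℝ => c0 * Complex.exp (-zb*t)) := by
        filter_upwards [Ioi_mem_nhds h1] with s hs
        rw [hu_def]
        simp only [if_neg (not_le.mpr (mem_Ioi.mp hs))]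
      have hD := (hF2d t).congr_of_eventuallyEq heq
      have hvt : vf t = -zb * (c0 * Complex.exp (-zb*t)) := by
        rw [hv_def]; simp only [if_neg (not_le.mpr h1)]
      rw [hvt]; exact hD
  -- ODE for vf
  have hvder : ∀ t ∈ Ioo (0:ℝ) 1 ∪ Ioi 1,
      HasDerivAt vf ((if t < 1 then ((α:ℂ)^2) else ((β:ℂ)^2)) * lam^2 * u t) t := by
    intro t ht
    rcases ht with ht | ht
    · have heq : vf =ᶠ[𝓝 t]
          (fun t : ℝ => z * (a * Complex.exp (z*t) - b * Complex.exp (-z*t))) := by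
        filter_upwards [Iio_mem_nhds ht.2] with s hs
        rw [hv_def]; simp only [if_pos (le_of_lt (mem_Iio.mp hs))]
      have h1 := (hasDerivAt_expc z t).const_mul a
      have h2 := (hasDerivAt_expc (-z) t).const_mul b
      have hD := ((h1.sub h2).const_mul z).congr_of_eventuallyEq heq
      rw [if_pos ht.2]
      have hut : u t = a * Complex.exp (z*t) + b * Complex.exp (-z*t) := by
        rw [hu_def]; simp only [if_pos (le_of_lt ht.2)]
      rw [hut]
      have hzsq : (α:ℂ)^2*lam^2*(a * Complex.exp (z*(t:ℝ)) + b * Complex.exp (-z*(t:ℝ)))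
          = z * (a * (z * Complex.exp (z * (t:ℝ))) - b * (-z * Complex.exp (-z * (t:ℝ)))) := by
        rw [hz_def]; ring
      rw [hzsq]
      exact hD
    · have heq : vf =ᶠ[𝓝 t] (fun t : ℝ => -zb * (c0 * Complex.exp (-zb*t))) := by
        filter_upwards [Ioi_mem_nhds ht] with s hs
        rw [hv_def]; simp only [if_neg (not_le.mpr (mem_Ioi.mp hs))]
      have hD := ((hasDerivAt_expc (-zb) t).const_mul c0).const_mul (-zb)
      have hD' := hD.congr_of_eventuallyEq heq
      rw [if_neg (not_lt.mpr (le_of_lt ht))]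
      have hut : u t = c0 * Complex.exp (-zb*t) := by
        rw [hu_def]; simp only [if_neg (not_le.mpr (mem_Ioi.1 ht))]
      rw [hut]
      have hzsq : (β:ℂ)^2*lam^2*(c0 * Complex.exp (-zb*(t:ℝ)))
          = -zb * (c0 * (-zb * Complex.exp (-zb * (t:ℝ)))) := by
        rw [hzb_def]; ring
      rw [hzsq]
      exact hD'
  -- square integrability
  have hbr : 0 < β * lam.re := mul_pos hβ hlam
  have hint : IntegrableOn (fun t => ‖u t‖^2) (Ioi (0:ℝ)) := by
    rw [← Ioc_union_Ioi_eq_Ioi (zero_le_one (α := ℝ))]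
    apply IntegrableOn.union
    · exact (hcu.norm.pow 2).integrableOn_Ioc
    · have hmono : IntegrableOn (fun t : ℝ => ‖c0‖^2 * Real.exp (-(2*(β*lam.re)) * t))
          (Ioi 1) := (exp_neg_integrableOn_Ioi 1 (by positivity)).const_mul _
      refine hmono.congr_fun ?_ measurableSet_Ioi
      intro t ht
      have hnt : ¬ (t ≤ 1) := not_le.mpr ht
      have hre' : (-zb * (t:ℂ)).re = -(β * lam.re * t) := by
        rw [neg_mul, Complex.neg_re, Complex.mul_re, Complex.ofReal_re, Complex.ofReal_im,
          hzb_def, Complex.re_ofReal_mul]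
        ring
      have h1 : ‖u t‖ = ‖c0‖ * Real.exp (-(β * lam.re * t)) := by
        rw [hu_def]
        simp only [if_neg hnt]
        rw [norm_mul c0 (Complex.exp (-zb * (t:ℂ))),
          Complex.norm_exp, hre']
      show ‖c0‖^2 * Real.exp (-(2*(β*lam.re)) * t) = ‖u t‖^2
      rw [h1, mul_pow]
      congr 1
      rw [pow_two, ← Real.exp_add]
      congr 1
      ring
  refine ⟨u, ⟨hcu.continuousOn, ?_, ⟨vf, huder, hcv.continuousOn, hvder⟩, hint⟩, ?_⟩
  · rw [hu_def]
    simp only [if_pos (zero_le_one (α := ℝ)), Complex.ofReal_zero, mul_zero,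
      Complex.exp_zero, mul_one]
    exact hsum
  -- uniqueness
  intro w hw
  obtain ⟨hwc, hw0, ⟨vw, hwv, hvwc, hwode⟩, hwL2⟩ := hw
  obtain ⟨a₂, b₂, c₂, hIcc, hIci, hv3, hv4⟩ := shape hα hβ hlam hwc hwv hvwc hwode hwL2
  rw [← hz_def, ← hzb_def] at hv3 hv4
  have hsum₂ : a₂ + b₂ = φ := by
    have h := hIcc 0 (left_mem_Icc.mpr zero_le_one)
    rw [hw0] at h
    simpa using h.symm
  have hkey₂ : ((α:ℂ)+β) * (a₂ * Complex.exp z) = ((α:ℂ)-β) * (b₂ * Complex.exp (-z)) := by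
    have h0 : lam * (((α:ℂ)+β) * (a₂ * Complex.exp z)
        - ((α:ℂ)-β) * (b₂ * Complex.exp (-z))) = 0 := by
      rw [hz_def] at hv4 ⊢
      rw [hzb_def] at hv4
      linear_combination hv4 + ((β:ℂ)*lam) * hv3
    rcases mul_eq_zero.mp h0 with h | h
    · exact absurd h hlam0
    · exact sub_eq_zero.mp h
  have hd : (a₂ - a) * (((α:ℂ)+β) * Complex.exp z + ((α:ℂ)-β) * Complex.exp (-z)) = 0 := by
    linear_combination hkey₂ - hkey + ((α:ℂ)-β) * Complex.exp (-z) * (hsum₂.trans hsum.symm)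
  have ha2 : a₂ = a := sub_eq_zero.mp ((mul_eq_zero.mp hd).resolve_right hK)
  have hb2 : b₂ = b := by
    have h := hsum₂.trans hsum.symm
    linear_combination h - ha2
  have hc2 : c₂ = c0 := by
    rw [ha2, hb2] at hv3
    rw [hc0_def, hv3, mul_assoc, ← Complex.exp_add]
    simp
  intro t ht
  by_cases h1 : t ≤ 1
  · have h := hIcc t ⟨ht, h1⟩
    rw [← hz_def, ha2, hb2] at h
    rw [hu_def]
    simp only [if_pos h1]
    exact h
  · have h := hIci t (le_of_lt (not_le.mp h1))
    rw [← hzb_def, hc2] at h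
    rw [hu_def]
    simp only [if_neg h1]
    exact h
end
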